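/- If a time-dependent vector field f on R^n is G-equivariant for a linear group action and the prior density q_Z is G-invariant, then the density of x = y(t₁) obtained by flowing samples z ∼ q_Z along y' = f(y, t) from t₀ to t₁ is G-invariant. -/

import Mathlib

/-- If the time-dependent vector field `f` is `G`-equivariant
for a linear action with `|det ρ(g)| = 1` and the prior density `qZ` is
`G`-invariant, then the pushforward density along the flow `Φ` of `y' = f (y t) t`
from `t₀` to `t₁`, i.e. `qX x = qZ (Φ⁻¹ x) * |det D(Φ⁻¹)(x)|`, is `G`-invariant. -/
theorem equivariant_cnf_invariant_density
    {n : ℕ} {G : Type*} [Group G]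
    (ρ : G →* ((Fin n → ℝ) ≃ₗ[ℝ] (Fin n → ℝ)))
    (hdet : ∀ g : G, |LinearMap.det ((ρ g : (Fin n → ℝ) ≃ₗ[ℝ] (Fin n → ℝ)) :
      (Fin n → ℝ) →ₗ[ℝ] (Fin n → ℝ))| = 1)
    (f : (Fin n → ℝ) → ℝ → (Fin n → ℝ))
    (heq : ∀ (g : G) (y : Fin n → ℝ) (t : ℝ), f (ρ g y) t = ρ g (f y t))
    (qZ : (Fin n → ℝ) → ℝ)
    (hinv : ∀ (g : G) (z : Fin n → ℝ), qZ (ρ g z) = qZ z)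
    (t₀ t₁ : ℝ)
    (Φ : (Fin n → ℝ) ≃ (Fin n → ℝ))
    (hΦ : Differentiable ℝ Φ)
    (hΦsymm : Differentiable ℝ Φ.symm)
    -- `Φ` is the flow map of the ODE from `t₀` to `t₁`
    (hflow : ∀ z : Fin n → ℝ, ∃ y : ℝ → (Fin n → ℝ),
      y t₀ = z ∧ y t₁ = Φ z ∧ ∀ t ∈ Set.Icc t₀ t₁, HasDerivAt y (f (y t) t) t)
    -- uniqueness of solutions
    (huniq : ∀ y₁ y₂ : ℝ → (Fin n → ℝ),
      (∀ t ∈ Set.Icc t₀ t₁, HasDerivAt y₁ (f (y₁ t) t) t) →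
      (∀ t ∈ Set.Icc t₀ t₁, HasDerivAt y₂ (f (y₂ t) t) t) →
      y₁ t₀ = y₂ t₀ → y₁ t₁ = y₂ t₁)
    (qX : (Fin n → ℝ) → ℝ)
    (hqX : ∀ x, qX x = qZ (Φ.symm x) * |(fderiv ℝ Φ.symm x).det|) :
    ∀ (g : G) (x : Fin n → ℝ), qX (ρ g x) = qX x := by
  intro g x
  set E := (ρ g : (Fin n → ℝ) ≃ₗ[ℝ] (Fin n → ℝ)).toContinuousLinearEquiv with hE
  have hEcoe : ∀ z, E z = ρ g z := fun z => rfl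
  -- the flow commutes with the group action
  have hcomm : ∀ z : Fin n → ℝ, Φ (ρ g z) = ρ g (Φ z) := by
    intro z
    obtain ⟨y, hy0, hy1, hyd⟩ := hflow z
    obtain ⟨y', hy0', hy1', hyd'⟩ := hflow (ρ g z)
    have hgyd : ∀ t ∈ Set.Icc t₀ t₁,
        HasDerivAt (fun t => ρ g (y t)) (f (ρ g (y t)) t) t := by
      intro t ht
      have h := ((E : (Fin n → ℝ) →L[ℝ] (Fin n → ℝ)).hasFDerivAt).comp_hasDerivAt
        t (hyd t ht)
      rw [heq]; exact h
    have := huniq (fun t => ρ g (y t)) y' hgyd hyd' (by simp [hy0, hy0'])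
    simp only [hy1, hy1'] at this
    exact this.symm
  have hsymm : Φ.symm (ρ g x) = ρ g (Φ.symm x) := by
    apply Φ.injective
    rw [Φ.apply_symm_apply, hcomm, Φ.apply_symm_apply]
  -- derivative identity via chain rule on Φ.symm ∘ E = E ∘ Φ.symm
  have hfun : (fun z => Φ.symm (E z)) = (fun z => E (Φ.symm z)) := by
    funext z
    have := hsymm  -- not used; prove pointwise
    calc Φ.symm (E z) = Φ.symm (ρ g z) := rfl
      _ = ρ g (Φ.symm z) := by
          apply Φ.injective
          rw [Φ.apply_symm_apply, hcomm, Φ.apply_symm_apply]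
      _ = E (Φ.symm z) := rfl
  have hd1 : HasFDerivAt (fun z => Φ.symm (E z))
      ((fderiv ℝ Φ.symm (E x)).comp (E : (Fin n → ℝ) →L[ℝ] (Fin n → ℝ))) x :=
    ((hΦsymm (E x)).hasFDerivAt).comp x (E : (Fin n → ℝ) →L[ℝ] (Fin n → ℝ)).hasFDerivAt
  have hd2 : HasFDerivAt (fun z => E (Φ.symm z))
      (((E : (Fin n → ℝ) →L[ℝ] (Fin n → ℝ))).comp (fderiv ℝ Φ.symm x)) x :=
    ((E : (Fin n → ℝ) →L[ℝ] (Fin n → ℝ)).hasFDerivAt).comp x (hΦsymm x).hasFDerivAt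
  have hd1' : HasFDerivAt (fun z => E (Φ.symm z))
      ((fderiv ℝ Φ.symm (E x)).comp (E : (Fin n → ℝ) →L[ℝ] (Fin n → ℝ))) x := by
    rwa [hfun] at hd1
  have hder := hd1'.unique hd2
  -- determinants
  have hdet1 : (fderiv ℝ Φ.symm (E x)).det *
      LinearMap.det ((ρ g : (Fin n → ℝ) ≃ₗ[ℝ] (Fin n → ℝ)) :
        (Fin n → ℝ) →ₗ[ℝ] (Fin n → ℝ)) =
      LinearMap.det ((ρ g : (Fin n → ℝ) ≃ₗ[ℝ] (Fin n → ℝ)) :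
        (Fin n → ℝ) →ₗ[ℝ] (Fin n → ℝ)) * (fderiv ℝ Φ.symm x).det := by
    have h1 := congrArg ContinuousLinearMap.det hder
    simp only [ContinuousLinearMap.det, ContinuousLinearMap.toLinearMap_comp] at h1 ⊢
    rw [LinearMap.det_comp, LinearMap.det_comp] at h1
    convert h1 using 2 <;> rfl
  have habs : |(fderiv ℝ Φ.symm (ρ g x)).det| = |(fderiv ℝ Φ.symm x).det| := by
    have hx : E x = ρ g x := rfl
    have := congrArg abs hdet1
    rw [abs_mul, abs_mul, hdet g, mul_one, one_mul, hx] at this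
    exact this
  rw [hqX, hqX, hsymm, hinv, habs]
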